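/- Let $p$ and $m$ be positive integers and let $\gamma_1,\dots,\gamma_m \in \Phi_p$ be such that $\sum_{i=1}^m \gamma_i \in [0,1]$. Then $\sum_{i=1}^m \gamma_i \in \Phi_p$. -/

import Mathlib

/-- The hyperstandard set `Φ_p = {1 - k/(p·m) | m ∈ ℕ⁺, 0 ≤ k ≤ p} ∩ [0,1]`. -/
def Phi (p : ℕ) : Set ℝ :=
  {x | (∃ m k : ℕ, 0 < m ∧ k ≤ p ∧ x = 1 - (k : ℝ) / (p * m)) ∧ 0 ≤ x ∧ x ≤ 1}

lemma zero_mem_Phi {p : ℕ} (hp : 0 < p) : (0 : ℝ) ∈ Phi p := by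
  have hpr : (0:ℝ) < p := by exact_mod_cast hp
  exact ⟨⟨1, p, one_pos, le_refl _, by field_simp; simp⟩, le_refl _, zero_le_one⟩

lemma key_Phi (p k k' n' : ℕ) (hn' : 0 < n') (hk : k ≤ p) (hk' : k' ≤ p)
    (hp : 0 < p) (hge : p * n' ≤ k * n' + k') :
    ∃ N j : ℕ, 0 < N ∧ j ≤ p ∧
      (1 - (k:ℝ)/(p*1)) + (1 - (k':ℝ)/(p*n')) = 1 - (j:ℝ)/(p*N) := by
  have hpr : (0:ℝ) < p := by exact_mod_cast hp
  have hnr : (0:ℝ) < n' := by exact_mod_cast hn'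
  refine ⟨n', k * n' + k' - p * n', hn', ?_, ?_⟩
  · have h1 : k * n' ≤ p * n' := Nat.mul_le_mul_right _ hk
    omega
  · have hc : ((k * n' + k' - p * n' : ℕ) : ℝ) = (k:ℝ) * n' + k' - p * n' := by
      rw [Nat.cast_sub hge]; push_cast; ring
    rw [hc]
    field_simp
    ring

lemma add_mem_Phi {p : ℕ} (hp : 0 < p) {x y : ℝ} (hx : x ∈ Phi p) (hy : y ∈ Phi p)
    (hsum : x + y ≤ 1) : x + y ∈ Phi p := by
  obtain ⟨⟨n, k, hn, hk, hxe⟩, hx0, hx1⟩ := hx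
  obtain ⟨⟨n', k', hn', hk', hye⟩, hy0, hy1⟩ := hy
  refine ⟨?_, by linarith, hsum⟩
  have hpr : (0:ℝ) < p := by exact_mod_cast hp
  have hnr : (0:ℝ) < n := by exact_mod_cast hn
  have hnr' : (0:ℝ) < n' := by exact_mod_cast hn'
  by_cases h1 : x + y = 1
  · exact ⟨1, 0, one_pos, Nat.zero_le _, by simp [h1]⟩
  have hlt : x + y < 1 := lt_of_le_of_ne hsum h1
  have hxl : 1 - 1/(n:ℝ) ≤ x := by
    rw [hxe]
    have : (k:ℝ)/(p*n) ≤ 1/n := by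
      rw [div_le_div_iff₀ (by positivity) hnr]
      have : (k:ℝ) ≤ p := by exact_mod_cast hk
      nlinarith
    linarith
  have hyl : 1 - 1/(n':ℝ) ≤ y := by
    rw [hye]
    have : (k':ℝ)/(p*n') ≤ 1/n' := by
      rw [div_le_div_iff₀ (by positivity) hnr']
      have : (k':ℝ) ≤ p := by exact_mod_cast hk'
      nlinarith
    linarith
  have hone : n = 1 ∨ n' = 1 := by
    by_contra hc
    push_neg at hc
    have h2 : 2 ≤ n := by omega
    have h2' : 2 ≤ n' := by omega
    have : (2:ℝ) ≤ n := by exact_mod_cast h2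
    have : (2:ℝ) ≤ n' := by exact_mod_cast h2'
    have hx2 : 1/(n:ℝ) ≤ 1/2 := by
      apply one_div_le_one_div_of_le <;> linarith
    have hy2 : 1/(n':ℝ) ≤ 1/2 := by
      apply one_div_le_one_div_of_le <;> linarith
    linarith
  rcases hone with h | h
  · subst h
    -- x = 1 - k/(p*1), y = 1 - k'/(p*n')
    have hge : p * n' ≤ k * n' + k' := by
      have hr : (p:ℝ) * n' ≤ (k:ℝ) * n' + k' := by
        rw [hxe, hye] at hsum
        push_cast at hsum
        rw [mul_one] at hsum
        have h3 : 1 ≤ (k:ℝ)/p + k'/(p*n') := by linarith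
        have h4 : 1 * ((p:ℝ)*n') ≤ ((k:ℝ)/p + k'/(p*n')) * (p*n') :=
          mul_le_mul_of_nonneg_right h3 (by positivity)
        have h5 : ((k:ℝ)/p + k'/(p*n')) * (p*n') = k*n' + k' := by
          field_simp
        linarith
      exact_mod_cast hr
    obtain ⟨N, j, hN, hj, heq⟩ := key_Phi p k k' n' hn' hk hk' hp hge
    exact ⟨N, j, hN, hj, by rw [hxe, hye]; push_cast; push_cast at heq; linarith⟩
  · subst h
    have hge : p * n ≤ k' * n + k := by
      have hr : (p:ℝ) * n ≤ (k':ℝ) * n + k := by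
        rw [hxe, hye] at hsum
        push_cast at hsum
        rw [mul_one] at hsum
        have h3 : 1 ≤ (k':ℝ)/p + k/(p*n) := by linarith
        have h4 : 1 * ((p:ℝ)*n) ≤ ((k':ℝ)/p + k/(p*n)) * (p*n) :=
          mul_le_mul_of_nonneg_right h3 (by positivity)
        have h5 : ((k':ℝ)/p + k/(p*n)) * (p*n) = k'*n + k := by
          field_simp
        linarith
      exact_mod_cast hr
    obtain ⟨N, j, hN, hj, heq⟩ := key_Phi p k' k n hn hk' hk hp hge
    exact ⟨N, j, hN, hj, by rw [hxe, hye]; push_cast; push_cast at heq; linarith⟩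

theorem sum_mem_Phi (p m : ℕ) (hp : 0 < p) (hm : 0 < m) (γ : Fin m → ℝ)
    (hγ : ∀ i, γ i ∈ Phi p) (h0 : 0 ≤ ∑ i, γ i) (h1 : ∑ i, γ i ≤ 1) :
    (∑ i, γ i) ∈ Phi p := by
  clear hm h0
  revert γ
  induction m with
  | zero => intro γ _ _; simpa using zero_mem_Phi hp
  | succ m ih =>
    intro γ hγ h1
    rw [Fin.sum_univ_succ]
    rw [Fin.sum_univ_succ] at h1
    have h0' : 0 ≤ γ 0 := (hγ 0).2.1
    have htail : ∑ i : Fin m, γ i.succ ≤ 1 := by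
      linarith
    exact add_mem_Phi hp (hγ 0) (ih (fun i => γ i.succ) (fun i => hγ i.succ) htail) (by linarith)
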